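/- Assume G is connected, n ≥ 3, and (G;C) is twin free. Let t ≥ 1 and W = {w₁,…,w_t} ⊆ V satisfy N⟨w_j⟩ ⊆ N⟨w₁⟩ for all j = 2,…,t, and let i ∈ {1,…,m−1}. Then the (valid) inequality Σ_{w∈W} y_{w,i+1} ≤ Σ_{u∈N⟨w₁⟩} (x_{u,i} − x_{u,i+1}) is facet-defining for P if and only if every v ∈ V ∖ W satisfies w₁ ◁ v (i.e., W is maximal with respect to the property N⟨·⟩ ⊆ N⟨w₁⟩). -/

import Mathlib

open Finset

namespace LegalSeq

variable {V : Type*}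

/-- The generalized neighborhood `N⟨v⟩`: the closed neighborhood of `v` if `v ∈ C`,
the open neighborhood otherwise. -/
noncomputable def gN [Fintype V] (G : SimpleGraph V) (C : Set V) (v : V) : Finset V := by
  classical
  exact (Set.toFinite (if v ∈ C then insert v (G.neighborSet v) else G.neighborSet v)).toFinset

/-- The ambient space `ℝ^{V×{1,…,m}} × ℝ^{V×{1,…,m}}` of the polytope of legal sequences. -/
abbrev Pt (V : Type*) (m : ℕ) := (V × Fin m → ℝ) × (V × Fin m → ℝ)

/-- Feasible 0/1 pairs `(x, y)` of the formulation `F₁` (constraints (1)-(5)). -/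
def Feasible [Fintype V] (G : SimpleGraph V) (C : Set V) (m : ℕ) : Set (Pt V m) :=
  { p | (∀ q, p.1 q = 0 ∨ p.1 q = 1) ∧ (∀ q, p.2 q = 0 ∨ p.2 q = 1) ∧
    (∀ i : Fin m, ∑ v : V, p.2 (v, i) ≤ 1) ∧
    (∀ v : V, ∑ i : Fin m, p.2 (v, i) ≤ 1) ∧
    (∀ (v : V) (i : Fin m) (h : i.1 + 1 < m),
        p.2 (v, ⟨i.1 + 1, h⟩) ≤ ∑ u ∈ gN G C v, (p.1 (u, i) - p.1 (u, ⟨i.1 + 1, h⟩))) ∧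
    (∀ (u : V) (i : Fin m), p.1 (u, i) + ∑ v ∈ gN G C u, p.2 (v, i) ≤ 1) ∧
    (∀ (u : V) (i : Fin m) (h : i.1 + 1 < m), p.1 (u, ⟨i.1 + 1, h⟩) ≤ p.1 (u, i)) }

/-- The polytope of legal sequences: the convex hull of the feasible 0/1 pairs. -/
noncomputable def poly [Fintype V] (G : SimpleGraph V) (C : Set V) (m : ℕ) : Set (Pt V m) :=
  convexHull ℝ (Feasible G C m)

/-- `δ(G;C)`, the minimum cardinality of a generalized neighborhood. -/
noncomputable def gdelta [Fintype V] (G : SimpleGraph V) (C : Set V) : ℕ :=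
  sInf (Set.range fun v : V => (gN G C v).card)

/-- The instance `(G;C)` is twin free if distinct vertices have distinct
generalized neighborhoods. -/
def TwinFree [Fintype V] (G : SimpleGraph V) (C : Set V) : Prop :=
  ∀ u v : V, u ≠ v → gN G C u ≠ gN G C v

/-- The inequality `f p ≤ a` is valid for the polytope and the face it defines has affine
dimension `2nm - 1`, i.e. it is facet-defining. -/
def IsFacet [Fintype V] (G : SimpleGraph V) (C : Set V) (m : ℕ)
    (f : Pt V m → ℝ) (a : ℝ) : Prop :=
  (∀ p ∈ poly G C m, f p ≤ a) ∧
  Module.finrank ℝ ((affineSpan ℝ {p ∈ poly G C m | f p = a}).direction) =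
    2 * Fintype.card V * m - 1

section Aux

variable [Fintype V] {G : SimpleGraph V} {C : Set V}

lemma mem_gN {u v : V} : u ∈ gN G C v ↔ ((v ∈ C ∧ u = v) ∨ G.Adj v u) := by
  classical
  simp only [gN, Set.Finite.mem_toFinset]
  split_ifs with hv
  · simp [Set.mem_insert_iff, hv, or_comm, and_comm]
  · simp [hv]

lemma gN_nonempty (hiso : ∀ w : V, w ∉ C → ∃ z, G.Adj w z) (v : V) :
    ∃ u, u ∈ gN G C v := by
  by_cases hv : v ∈ C
  · exact ⟨v, mem_gN.2 (Or.inl ⟨hv, rfl⟩)⟩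
  · obtain ⟨z, hz⟩ := hiso v hv
    exact ⟨z, mem_gN.2 (Or.inr hz)⟩

/-- The linear functional `p ↦ Σ_{w∈W} y_{w,i'} - Σ_{u∈N} (x_{u,i} - x_{u,i'})`. -/
noncomputable def fL (W N : Finset V) {m : ℕ} (i i' : Fin m) : Pt V m →ₗ[ℝ] ℝ where
  toFun p := (∑ w ∈ W, p.2 (w, i')) - ∑ u ∈ N, (p.1 (u, i) - p.1 (u, i'))
  map_add' p q := by
    simp only [Prod.fst_add, Prod.snd_add, Pi.add_apply, Finset.sum_add_distrib,
      Finset.sum_sub_distrib]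
    ring
  map_smul' c p := by
    simp only [Prod.smul_fst, Prod.smul_snd, Pi.smul_apply, smul_eq_mul, RingHom.id_apply,
      ← Finset.mul_sum, ← mul_sub]

/-- The coordinate functional `p ↦ p.2 q`. -/
noncomputable def yL (q : V × Fin m) : Pt V m →ₗ[ℝ] ℝ where
  toFun p := p.2 q
  map_add' p q := rfl
  map_smul' c p := rfl

open scoped Classical in
/-- x-part: indicator of `{u} × {0,…,t-1}`. -/
noncomputable def xInd (m : ℕ) (u : V) (t : ℕ) : V × Fin m → ℝ :=
  fun q => if q.1 = u ∧ q.2.1 < t then 1 else 0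

open scoped Classical in
/-- y-part: indicator of `{(v,j)}`. -/
noncomputable def yInd (m : ℕ) (v : V) (j : Fin m) : V × Fin m → ℝ :=
  fun q => if q = (v, j) then 1 else 0

noncomputable def Xp (m : ℕ) (u : V) (t : ℕ) : Pt V m := (xInd m u t, 0)

noncomputable def Yp (m : ℕ) (v : V) (j : Fin m) (u : V) : Pt V m :=
  (xInd m u j.1, yInd m v j)

lemma xInd_diff_nonneg {m : ℕ} (u : V) (t : ℕ) (u' : V) (i : Fin m) (h : i.1 + 1 < m) :
    0 ≤ xInd m u t (u', i) - xInd m u t (u', ⟨i.1 + 1, h⟩) := by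
  classical
  simp only [xInd]
  split_ifs with h1 h2 h2 <;> norm_num
  exact absurd ⟨h2.1, by omega⟩ h1

lemma Xp_feasible {m : ℕ} (u : V) (t : ℕ) : Xp m u t ∈ Feasible G C m := by
  classical
  refine ⟨fun q => ?_, fun q => Or.inl rfl, fun i => by simp [Xp], fun v => by simp [Xp],
    fun v i h => ?_, fun u' i => ?_, fun u' i h => ?_⟩
  · simp only [Xp, xInd]; split_ifs <;> simp
  · exact le_trans (by simp [Xp]) (Finset.sum_nonneg fun u' _ => xInd_diff_nonneg u t u' i h)
  · simp only [Xp, xInd]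
    have : (0:ℝ) + 0 ≤ 1 := by norm_num
    split_ifs <;> simp
  · have := xInd_diff_nonneg u t u' i h
    simp only [Xp] at *
    linarith

open scoped Classical in
lemma sum_yInd_vertex {m : ℕ} (v : V) (j : Fin m) (i : Fin m) (s : Finset V) :
    ∑ v' ∈ s, yInd m v j (v', i) = if v ∈ s ∧ i = j then 1 else 0 := by
  classical
  simp only [yInd, Prod.mk.injEq]
  by_cases hij : i = j
  · simp only [hij, and_true]
    rw [Finset.sum_ite_eq' s v (fun _ => (1:ℝ))]
  · simp [hij]

lemma Yp_feasible {m : ℕ} {v u : V} (hu : u ∈ gN G C v) (j : Fin m) :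
    Yp m v j u ∈ Feasible G C m := by
  classical
  refine ⟨fun q => ?_, fun q => ?_, fun i => ?_, fun v' => ?_, fun v' i h => ?_,
    fun u' i => ?_, fun u' i h => ?_⟩
  · simp only [Yp, xInd]; split_ifs <;> simp
  · simp only [Yp, yInd]; split_ifs <;> simp
  · rw [show (Yp m v j u).2 = yInd m v j from rfl]
    rw [sum_yInd_vertex v j i Finset.univ]
    split_ifs <;> norm_num
  · simp only [Yp, yInd, Prod.mk.injEq]
    by_cases hv' : v' = v
    · subst hv'
      simp only [true_and]
      rw [Finset.sum_ite_eq' Finset.univ j (fun _ => (1:ℝ))]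
      split_ifs <;> norm_num
    · simp [hv']
  · -- constraint (3)
    by_cases hmatch : ((v', (⟨i.1 + 1, h⟩ : Fin m)) = (v, j))
    · obtain ⟨hv', hj⟩ := Prod.mk.inj hmatch
      subst hv'
      have hj1 : j.1 = i.1 + 1 := by rw [← hj]
      have hterm : ∀ u' ∈ gN G C v',
          (Yp m v' j u).1 (u', i) - (Yp m v' j u).1 (u', ⟨i.1 + 1, h⟩) =
            if u' = u then 1 else 0 := by
        intro u' _
        simp only [Yp, xInd, hj1]
        have h1 : i.1 < i.1 + 1 := by omega
        have h2 : ¬ (i.1 + 1 < i.1 + 1) := by omega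
        simp [h1, h2]
      rw [Finset.sum_congr rfl hterm, Finset.sum_ite_eq' (gN G C v') u (fun _ => (1:ℝ))]
      simp [Yp, yInd, hmatch, hu]
    · have h0 : (Yp m v j u).2 (v', ⟨i.1 + 1, h⟩) = 0 := by
        simp only [Yp, yInd]
        exact if_neg hmatch
      rw [h0]
      exact Finset.sum_nonneg fun u' _ => xInd_diff_nonneg u j.1 u' i h
  · -- constraint (4)
    rw [show (Yp m v j u).2 = yInd m v j from rfl]
    rw [sum_yInd_vertex v j i (gN G C u')]
    by_cases hij : i = j
    · have hx : (Yp m v j u).1 (u', i) = 0 := by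
        simp only [Yp, xInd, hij]
        simp
      rw [hx]
      split_ifs <;> norm_num
    · simp only [hij, and_false, if_false]
      have : (Yp m v j u).1 (u', i) = 0 ∨ (Yp m v j u).1 (u', i) = 1 := by
        simp only [Yp, xInd]; split_ifs <;> simp
      rcases this with h'|h' <;> rw [h'] <;> norm_num
  · have := xInd_diff_nonneg u j.1 u' i h
    simp only [Yp] at *
    linarith

lemma zero_feasible {m : ℕ} : (0 : Pt V m) ∈ Feasible G C m := by
  refine ⟨fun q => Or.inl rfl, fun q => Or.inl rfl, fun i => by simp, fun v => by simp,
    fun v i h => by simp, fun u i => by simp, fun u i h => by simp⟩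

lemma feasible_valid (W : Finset V) (w1 : V) (hw1 : w1 ∈ W)
    (hW : ∀ w ∈ W, gN G C w ⊆ gN G C w1)
    {m : ℕ} (i : Fin m) (h : i.1 + 1 < m) {p : Pt V m} (hp : p ∈ Feasible G C m) :
    (∑ w ∈ W, p.2 (w, ⟨i.1 + 1, h⟩)) ≤
      ∑ u ∈ gN G C w1, (p.1 (u, i) - p.1 (u, ⟨i.1 + 1, h⟩)) := by
  obtain ⟨hx01, hy01, h1, h2, h3, h4, h5⟩ := hp
  have hdiff : ∀ u : V, 0 ≤ p.1 (u, i) - p.1 (u, ⟨i.1 + 1, h⟩) :=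
    fun u => sub_nonneg.2 (h5 u i h)
  by_cases hzero : ∀ w ∈ W, p.2 (w, ⟨i.1 + 1, h⟩) = 0
  · rw [Finset.sum_eq_zero hzero]
    exact Finset.sum_nonneg fun u _ => hdiff u
  · push_neg at hzero
    obtain ⟨w', hw'W, hw'⟩ := hzero
    have hw'1 : p.2 (w', ⟨i.1 + 1, h⟩) = 1 := (hy01 (w', ⟨i.1 + 1, h⟩)).resolve_left hw'
    have hyn : ∀ q, 0 ≤ p.2 q := fun q => by rcases hy01 q with h'|h' <;> simp [h']
    calc ∑ w ∈ W, p.2 (w, ⟨i.1 + 1, h⟩) ≤ ∑ v : V, p.2 (v, ⟨i.1 + 1, h⟩) :=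
          Finset.sum_le_sum_of_subset_of_nonneg (Finset.subset_univ W) (fun v _ _ => hyn _)
      _ ≤ 1 := h1 ⟨i.1 + 1, h⟩
      _ = p.2 (w', ⟨i.1 + 1, h⟩) := hw'1.symm
      _ ≤ ∑ u ∈ gN G C w', (p.1 (u, i) - p.1 (u, ⟨i.1 + 1, h⟩)) := h3 w' i h
      _ ≤ ∑ u ∈ gN G C w1, (p.1 (u, i) - p.1 (u, ⟨i.1 + 1, h⟩)) :=
          Finset.sum_le_sum_of_subset_of_nonneg (hW w' hw'W) (fun u _ _ => hdiff u)

lemma poly_valid (W : Finset V) (w1 : V) (hw1 : w1 ∈ W)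
    (hW : ∀ w ∈ W, gN G C w ⊆ gN G C w1)
    {m : ℕ} (i : Fin m) (h : i.1 + 1 < m) :
    ∀ p ∈ poly G C m, fL W (gN G C w1) i ⟨i.1 + 1, h⟩ p ≤ 0 := by
  intro p hp
  have hconv : Convex ℝ {p : Pt V m | fL W (gN G C w1) i ⟨i.1 + 1, h⟩ p ≤ 0} :=
    convex_halfSpace_le (fL W (gN G C w1) i ⟨i.1 + 1, h⟩).isLinear 0
  have hsub : Feasible G C m ⊆ {p : Pt V m | fL W (gN G C w1) i ⟨i.1 + 1, h⟩ p ≤ 0} := by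
    intro p hp
    exact sub_nonpos.2 (feasible_valid W w1 hw1 hW i h hp)
  exact convexHull_min hsub hconv hp

lemma poly_y_nonneg (q : V × Fin m) : ∀ p ∈ poly G C m, 0 ≤ yL q p := by
  intro p hp
  have hconv : Convex ℝ {p : Pt V m | 0 ≤ yL q p} := convex_halfSpace_ge (yL q).isLinear 0
  have hsub : Feasible G C m ⊆ {p : Pt V m | 0 ≤ yL q p} := by
    intro p hp
    rcases hp.2.1 q with h'|h' <;> simp [yL, h']
  exact convexHull_min hsub hconv hp

open scoped Classical in
lemma sum_xdiff {m : ℕ} (N : Finset V) (i : Fin m) (h : i.1 + 1 < m) (u : V) (t : ℕ) :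
    ∑ u' ∈ N, (xInd m u t (u', i) - xInd m u t (u', ⟨i.1 + 1, h⟩)) =
      if u ∈ N ∧ t = i.1 + 1 then 1 else 0 := by
  classical
  have hterm : ∀ u' ∈ N, xInd m u t (u', i) - xInd m u t (u', ⟨i.1 + 1, h⟩) =
      if u' = u ∧ t = i.1 + 1 then 1 else 0 := by
    intro u' _
    by_cases hu' : u' = u
    · simp only [xInd, hu', true_and]
      split_ifs with h1 h2 h3 <;> first | (exfalso; omega) | norm_num
    · simp [xInd, hu']
  rw [Finset.sum_congr rfl hterm]
  by_cases ht : t = i.1 + 1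
  · simp [ht, Finset.sum_ite_eq' N u (fun _ => (1:ℝ))]
  · simp [ht]

open scoped Classical in
lemma fL_Xp (W N : Finset V) {m : ℕ} (i : Fin m) (h : i.1 + 1 < m) (u : V) (t : ℕ) :
    fL W N i ⟨i.1 + 1, h⟩ (Xp m u t) = if u ∈ N ∧ t = i.1 + 1 then -1 else 0 := by
  classical
  have : fL W N i ⟨i.1 + 1, h⟩ (Xp m u t) =
      (∑ w ∈ W, (0:ℝ)) - ∑ u' ∈ N, (xInd m u t (u', i) - xInd m u t (u', ⟨i.1 + 1, h⟩)) := rfl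
  rw [this, Finset.sum_const_zero, zero_sub, sum_xdiff N i h u t]
  split_ifs <;> norm_num

open scoped Classical in
lemma fL_Yp (W N : Finset V) {m : ℕ} (i : Fin m) (h : i.1 + 1 < m) (v : V) (j : Fin m)
    (u : V) :
    fL W N i ⟨i.1 + 1, h⟩ (Yp m v j u) =
      (if v ∈ W ∧ (⟨i.1 + 1, h⟩ : Fin m) = j then 1 else 0) -
        (if u ∈ N ∧ j.1 = i.1 + 1 then 1 else 0) := by
  classical
  have : fL W N i ⟨i.1 + 1, h⟩ (Yp m v j u) =
      (∑ w ∈ W, yInd m v j (w, ⟨i.1 + 1, h⟩)) -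
        ∑ u' ∈ N, (xInd m u j.1 (u', i) - xInd m u j.1 (u', ⟨i.1 + 1, h⟩)) := rfl
  rw [this, sum_yInd_vertex v j ⟨i.1 + 1, h⟩ W, sum_xdiff N i h u j.1]


open scoped Classical in
lemma ex_split {m : ℕ} (u : V) (j : Fin m) :
    ((Pi.single (u, j) 1 : V × Fin m → ℝ), (0 : V × Fin m → ℝ)) =
      Xp m u (j.1 + 1) - Xp m u j.1 := by
  classical
  refine Prod.ext ?_ (by simp [Xp])
  funext q
  obtain ⟨a, b⟩ := q
  simp only [Prod.fst_sub, Pi.sub_apply, Xp, xInd, Pi.single_apply, Prod.mk.injEq]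
  by_cases ha : a = u
  · simp only [ha, true_and]
    by_cases hb : b = j
    · have hb1 : b.1 = j.1 := by rw [hb]
      simp only [hb, if_true]
      rw [if_pos (by omega), if_neg (by omega)]
      norm_num
    · have hb1 : b.1 ≠ j.1 := fun hh => hb (Fin.ext hh)
      simp only [hb, if_false]
      by_cases hlt : b.1 < j.1
      · rw [if_pos (by omega), if_pos (by omega)]; norm_num
      · rw [if_neg (by omega), if_neg (by omega)]; norm_num
  · simp [ha]

open scoped Classical in
lemma ey_split {m : ℕ} (v : V) (j : Fin m) (u : V) :
    Yp m v j u = Xp m u j.1 + ((0 : V × Fin m → ℝ), (Pi.single (v, j) 1 : V × Fin m → ℝ)) := by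
  classical
  refine Prod.ext (by simp [Yp, Xp]) ?_
  funext q
  simp [Yp, Xp, yInd, Pi.single_apply]


end Aux

/-- Under the hypotheses of Statement 14 and with `G` connected, `n ≥ 3`,
`(G;C)` twin free: the valid inequality
`Σ_{w∈W} y_{w,i+1} ≤ Σ_{u∈N⟨w₁⟩} (x_{u,i} − x_{u,i+1})` is facet-defining for `P` iff
every `v ∉ W` satisfies `w₁ ◁ v` (i.e. `N⟨v⟩ ⊄ N⟨w₁⟩`), that is, `W` is maximal. -/
theorem nested_ineq_facet_iff [Fintype V] (G : SimpleGraph V) (C : Set V)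
    (hconn : G.Connected) (hcard : 3 ≤ Fintype.card V)
    (hiso : ∀ w : V, w ∉ C → ∃ z, G.Adj w z)
    (htf : TwinFree G C)
    (m : ℕ) (hm : m = Fintype.card V - gdelta G C + 1)
    (W : Finset V) (w1 : V) (hw1 : w1 ∈ W)
    (hW : ∀ w ∈ W, gN G C w ⊆ gN G C w1)
    (i : Fin m) (h : i.1 + 1 < m) :
    IsFacet G C m
      (fun p => (∑ w ∈ W, p.2 (w, ⟨i.1 + 1, h⟩)) -
        ∑ u ∈ gN G C w1, (p.1 (u, i) - p.1 (u, ⟨i.1 + 1, h⟩))) 0 ↔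
    ∀ v : V, v ∉ W → ¬ (gN G C v ⊆ gN G C w1) := by
  classical
  have hm2 : 2 ≤ m := by omega
  unfold IsFacet
  set n := Fintype.card V with hn
  set i' : Fin m := ⟨i.1 + 1, h⟩ with hi'
  set N : Finset V := gN G C w1 with hNd
  set f : Pt V m →ₗ[ℝ] ℝ := fL W N i i' with hf
  have hset0 : {p ∈ poly G C m | (fun p : Pt V m => (∑ w ∈ W, p.2 (w, i')) -
      ∑ u ∈ N, (p.1 (u, i) - p.1 (u, i'))) p = 0} = {p ∈ poly G C m | f p = 0} := rfl
  rw [hset0]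
  have hPt : Module.finrank ℝ (Pt V m) = 2 * n * m := by
    rw [Module.finrank_prod, Module.finrank_fintype_fun_eq_card, Fintype.card_prod,
      Fintype.card_fin]
    ring
  have hnm : 2 ≤ 2 * n * m := by nlinarith
  have hvalid : ∀ p ∈ poly G C m, f p ≤ 0 := poly_valid W w1 hw1 hW i h
  have hfeas : Feasible G C m ⊆ poly G C m := subset_convexHull ℝ _
  have hfX : ∀ (u : V) (t : ℕ), f (Xp m u t) = if u ∈ N ∧ t = i.1 + 1 then -1 else 0 :=
    fun u t => fL_Xp W N i h u t
  have hfY : ∀ (v : V) (j : Fin m) (u : V), f (Yp m v j u) =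
      (if v ∈ W ∧ i' = j then 1 else 0) - (if u ∈ N ∧ j.1 = i.1 + 1 then 1 else 0) :=
    fun v j u => fL_Yp W N i h v j u
  constructor
  · rintro ⟨-, hdim⟩ v hvW hsub
    set g : Pt V m →ₗ[ℝ] ℝ := yL (v, i') with hg
    have hvne : v ≠ w1 := fun hh => hvW (hh ▸ hw1)
    have hW' : ∀ w ∈ insert v W, gN G C w ⊆ gN G C w1 := by
      intro w hw
      rcases Finset.mem_insert.1 hw with rfl | hw
      · exact hsub
      · exact hW w hw
    have hvalid' := poly_valid (insert v W) w1 (Finset.mem_insert_of_mem hw1) hW' i h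
    have hins : ∀ p : Pt V m, fL (insert v W) N i i' p = f p + p.2 (v, i') := by
      intro p
      have h1 : fL (insert v W) N i i' p =
          (∑ w ∈ insert v W, p.2 (w, i')) - ∑ u ∈ N, (p.1 (u, i) - p.1 (u, i')) := rfl
      have h2 : f p = (∑ w ∈ W, p.2 (w, i')) - ∑ u ∈ N, (p.1 (u, i) - p.1 (u, i')) := rfl
      rw [h1, h2, Finset.sum_insert hvW]
      ring
    have hface : ∀ p ∈ poly G C m, f p = 0 → p.2 (v, i') = 0 := by
      intro p hp hfp
      have h1 := hvalid' p hp
      rw [hins p, hfp, zero_add] at h1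
      have h2 : (0:ℝ) ≤ p.2 (v, i') := poly_y_nonneg (v, i') p hp
      linarith
    have hdirle : (affineSpan ℝ {p ∈ poly G C m | f p = 0}).direction ≤
        LinearMap.ker (f.prod g) := by
      rw [direction_affineSpan, vectorSpan_def]
      refine Submodule.span_le.2 ?_
      intro x hx
      rw [Set.mem_vsub] at hx
      obtain ⟨p1, hp1, p2, hp2, rfl⟩ := hx
      have e1 : f (p1 -ᵥ p2) = 0 := by
        rw [vsub_eq_sub, map_sub, hp1.2, hp2.2, sub_zero]
      have e2 : g (p1 -ᵥ p2) = 0 := by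
        have hh1 := hface p1 hp1.1 hp1.2
        have hh2 := hface p2 hp2.1 hp2.2
        show (p1 -ᵥ p2).2 (v, i') = 0
        rw [vsub_eq_sub]
        show p1.2 (v, i') - p2.2 (v, i') = 0
        rw [hh1, hh2, sub_zero]
      exact LinearMap.mem_ker.2 (Prod.ext e1 e2)
    have hsurj : LinearMap.range (f.prod g) = ⊤ := by
      rw [eq_top_iff]
      rintro ⟨a, b⟩ -
      set d1 : Pt V m := (0, yInd m w1 i') with hd1
      set d2 : Pt V m := (0, yInd m v i') with hd2
      have hfd1 : f d1 = 1 := by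
        have h1 : f d1 = (∑ w ∈ W, yInd m w1 i' (w, i')) - ∑ u ∈ N, ((0:ℝ) - 0) := rfl
        rw [h1, sum_yInd_vertex w1 i' i' W]
        simp [hw1]
      have hgd1 : g d1 = 0 := by
        show yInd m w1 i' (v, i') = 0
        simp [yInd, Prod.ext_iff, hvne]
      have hfd2 : f d2 = 0 := by
        have h1 : f d2 = (∑ w ∈ W, yInd m v i' (w, i')) - ∑ u ∈ N, ((0:ℝ) - 0) := rfl
        rw [h1, sum_yInd_vertex v i' i' W]
        simp [hvW]
      have hgd2 : g d2 = 1 := by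
        show yInd m v i' (v, i') = 1
        simp [yInd]
      refine LinearMap.mem_range.2 ⟨a • d1 + b • d2, ?_⟩
      rw [LinearMap.prod_apply]
      have e1 : f (a • d1 + b • d2) = a := by
        rw [map_add, map_smul, map_smul, hfd1, hfd2, smul_eq_mul, smul_eq_mul]
        ring
      have e2 : g (a • d1 + b • d2) = b := by
        rw [map_add, map_smul, map_smul, hgd1, hgd2, smul_eq_mul, smul_eq_mul]
        ring
      exact Prod.ext e1 e2
    have hkerdim : Module.finrank ℝ (LinearMap.ker (f.prod g)) = 2 * n * m - 2 := by
      have hrn := LinearMap.finrank_range_add_finrank_ker (f.prod g)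
      rw [hsurj, finrank_top, hPt] at hrn
      have h2 : Module.finrank ℝ (ℝ × ℝ) = 2 := by
        rw [Module.finrank_prod, Module.finrank_self]
      rw [h2] at hrn
      omega
    have hle := Submodule.finrank_mono hdirle
    rw [hdim, hkerdim] at hle
    omega
  · intro hmax
    refine ⟨fun p hp => hvalid p hp, ?_⟩
    set F : Set (Pt V m) := {p ∈ poly G C m | f p = 0} with hFd
    set S := Submodule.span ℝ F with hS
    have hFS : F ⊆ S := Submodule.subset_span
    set d : Pt V m := (0, yInd m w1 i') with hd
    have hfd : f d = 1 := by
      have h1 : f d = (∑ w ∈ W, yInd m w1 i' (w, i')) - ∑ u ∈ N, ((0:ℝ) - 0) := rfl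
      rw [h1, sum_yInd_vertex w1 i' i' W]
      simp [hw1]
    have hK1 : ∀ (u : V) (t : ℕ), Xp m u t - f (Xp m u t) • d ∈ S := by
      intro u t
      by_cases hut : u ∈ N ∧ t = i.1 + 1
      · rw [hfX u t, if_pos hut]
        obtain ⟨huN, rfl⟩ := hut
        have hYeq : Xp m u (i.1 + 1) - (-1 : ℝ) • d = Yp m w1 i' u := by
          rw [neg_smul, one_smul, sub_neg_eq_add]
          refine Prod.ext ?_ ?_
          · show xInd m u (i.1 + 1) + 0 = xInd m u i'.1
            simp only [add_zero]
            rfl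
          · show (0 : V × Fin m → ℝ) + yInd m w1 i' = yInd m w1 i'
            simp
        rw [hYeq]
        refine hFS ⟨hfeas (Yp_feasible huN i'), ?_⟩
        rw [hfY w1 i' u]
        have hii : i'.1 = i.1 + 1 := rfl
        simp [hw1, huN, hii]
      · rw [hfX u t, if_neg hut, zero_smul, sub_zero]
        refine hFS ⟨hfeas (Xp_feasible u t), ?_⟩
        rw [hfX u t, if_neg hut]
    have hKx : ∀ q : V × Fin m,
        ((Pi.single q 1 : V × Fin m → ℝ), (0 : V × Fin m → ℝ)) -
          f ((Pi.single q 1 : V × Fin m → ℝ), (0 : V × Fin m → ℝ)) • d ∈ S := by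
      rintro ⟨u, j⟩
      rw [ex_split u j]
      have halg : Xp m u (j.1 + 1) - Xp m u j.1 - f (Xp m u (j.1 + 1) - Xp m u j.1) • d =
          (Xp m u (j.1 + 1) - f (Xp m u (j.1 + 1)) • d) - (Xp m u j.1 - f (Xp m u j.1) • d) := by
        rw [map_sub, sub_smul]
        abel
      rw [halg]
      exact sub_mem (hK1 u (j.1 + 1)) (hK1 u j.1)
    have hKy : ∀ q : V × Fin m,
        ((0 : V × Fin m → ℝ), (Pi.single q 1 : V × Fin m → ℝ)) -
          f ((0 : V × Fin m → ℝ), (Pi.single q 1 : V × Fin m → ℝ)) • d ∈ S := by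
      rintro ⟨v, j⟩
      obtain ⟨u, hu, hYF⟩ : ∃ u, u ∈ gN G C v ∧ f (Yp m v j u) = 0 := by
        by_cases hj : j = i'
        · subst hj
          by_cases hvW : v ∈ W
          · obtain ⟨u, hu⟩ := gN_nonempty hiso v
            have huN : u ∈ N := hW v hvW hu
            refine ⟨u, hu, ?_⟩
            rw [hfY v i' u]
            have hii : i'.1 = i.1 + 1 := rfl
            simp [hvW, huN, hii]
          · obtain ⟨u, hu, huN⟩ := Finset.not_subset.1 (hmax v hvW)
            refine ⟨u, hu, ?_⟩
            rw [hfY v i' u]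
            simp [hvW, huN]
        · obtain ⟨u, hu⟩ := gN_nonempty hiso v
          refine ⟨u, hu, ?_⟩
          rw [hfY v j u]
          have h1 : ¬ (i' = j) := fun hh => hj hh.symm
          have h2 : ¬ (j.1 = i.1 + 1) := fun hh => hj (Fin.ext hh)
          simp [h1, h2]
      have hey : ((0 : V × Fin m → ℝ), (Pi.single (v, j) 1 : V × Fin m → ℝ)) =
          Yp m v j u - Xp m u j.1 := by
        rw [ey_split v j u]
        abel
      rw [hey]
      have halg : Yp m v j u - Xp m u j.1 - f (Yp m v j u - Xp m u j.1) • d =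
          (Yp m v j u - f (Yp m v j u) • d) - (Xp m u j.1 - f (Xp m u j.1) • d) := by
        rw [map_sub, sub_smul]
        abel
      rw [halg]
      have hYmem : Yp m v j u - f (Yp m v j u) • d ∈ S := by
        rw [hYF, zero_smul, sub_zero]
        exact hFS ⟨hfeas (Yp_feasible hu j), hYF⟩
      exact sub_mem hYmem (hK1 u j.1)
    have hT : ∀ z : Pt V m, z - f z • d ∈ S := by
      set T : Submodule ℝ (Pt V m) := Submodule.comap
        (LinearMap.id - (LinearMap.toSpanSingleton ℝ (Pt V m) d).comp f) S with hTd
      have hTmem : ∀ w : Pt V m, w ∈ T ↔ w - f w • d ∈ S := by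
        intro w
        rw [hTd, Submodule.mem_comap]
        simp [LinearMap.sub_apply, LinearMap.toSpanSingleton_apply]
      have hTtop : T = ⊤ := by
        rw [eq_top_iff,
          ← Module.Basis.span_eq ((Pi.basisFun ℝ (V × Fin m)).prod (Pi.basisFun ℝ (V × Fin m)))]
        refine Submodule.span_le.2 ?_
        rintro x ⟨s, rfl⟩
        rcases s with q | q
        · have hb : ((Pi.basisFun ℝ (V × Fin m)).prod (Pi.basisFun ℝ (V × Fin m))) (Sum.inl q) =
              ((Pi.single q 1 : V × Fin m → ℝ), (0 : V × Fin m → ℝ)) := by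
            simp
          rw [SetLike.mem_coe, hb, hTmem]
          exact hKx q
        · have hb : ((Pi.basisFun ℝ (V × Fin m)).prod (Pi.basisFun ℝ (V × Fin m))) (Sum.inr q) =
              ((0 : V × Fin m → ℝ), (Pi.single q 1 : V × Fin m → ℝ)) := by
            simp
          rw [SetLike.mem_coe, hb, hTmem]
          exact hKy q
      intro z
      exact (hTmem z).1 (hTtop ▸ Submodule.mem_top)
    have hSle : S ≤ LinearMap.ker f :=
      Submodule.span_le.2 (fun p hp => LinearMap.mem_ker.2 hp.2)
    have hker_le : LinearMap.ker f ≤ S := by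
      intro z hz
      have h1 := hT z
      rw [LinearMap.mem_ker.1 hz, zero_smul, sub_zero] at h1
      exact h1
    have hSeq : S = LinearMap.ker f := le_antisymm hSle hker_le
    have hdir : (affineSpan ℝ F).direction = S := by
      rw [direction_affineSpan]
      refine le_antisymm ?_ ?_
      · rw [vectorSpan_def]
        refine Submodule.span_le.2 ?_
        intro x hx
        rw [Set.mem_vsub] at hx
        obtain ⟨p1, hp1, p2, hp2, rfl⟩ := hx
        rw [SetLike.mem_coe, vsub_eq_sub]
        exact sub_mem (hFS hp1) (hFS hp2)
      · refine Submodule.span_le.2 ?_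
        intro p hp
        have h0F : (0 : Pt V m) ∈ F := ⟨hfeas zero_feasible, map_zero f⟩
        have hv := vsub_mem_vectorSpan ℝ hp h0F
        rw [vsub_eq_sub, sub_zero] at hv
        exact hv
    have hrn := LinearMap.finrank_range_add_finrank_ker f
    have hrange : LinearMap.range f = ⊤ := by
      rw [eq_top_iff]
      intro c _
      exact LinearMap.mem_range.2 ⟨c • d, by rw [map_smul, hfd, smul_eq_mul, mul_one]⟩
    rw [hrange, finrank_top, Module.finrank_self, hPt] at hrn
    rw [hdir, hSeq]
    rw [Nat.add_comm] at hrn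
    exact Nat.eq_sub_of_add_eq hrn

end LegalSeq
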